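/- Let G be a Ferrers bipartite graph on vertex sets {x_1,...,x_n} and {y_1,...,y_m} (so if e_{ij} is an edge then e_{rs} is an edge for all r ≤ i, s ≤ j). In the polynomial ring on variables e_{ij} for edges {x_i,y_j} of G, the kernel of the monomial map e_{ij} ↦ x_i y_j is generated by the quadratic binomials e_{i1,j1}·e_{i2,j2} - e_{i1,j2}·e_{i2,j1} (over pairs of edges for which all four are edges of G). -/

import Mathlib

open MvPolynomial

namespace Stmt17

variable {K : Type*} [Field K] {n m : ℕ} {E : Set (Fin n × Fin m)}

noncomputable def phi (d : E →₀ ℕ) : (Fin n ⊕ Fin m) →₀ ℕ :=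
  Finsupp.mapDomain (fun e : E => Sum.inl e.1.1) d +
  Finsupp.mapDomain (fun e : E => Sum.inr e.1.2) d

lemma phi_add (d d' : E →₀ ℕ) : phi (d + d') = phi d + phi d' := by
  simp only [phi, Finsupp.mapDomain_add]; abel

lemma phi_zero : phi (0 : E →₀ ℕ) = 0 := by simp [phi]

lemma phi_single (e : E) (k : ℕ) :
    phi (Finsupp.single e k) =
      Finsupp.single (Sum.inl e.1.1) k + Finsupp.single (Sum.inr e.1.2) k := by
  simp [phi, Finsupp.mapDomain_single]

lemma mapDomain_apply_eq {α β : Type*} [DecidableEq β] (f : α → β) (d : α →₀ ℕ) (b : β) :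
    Finsupp.mapDomain f d b = ∑ a ∈ d.support, if f a = b then d a else 0 := by
  rw [Finsupp.mapDomain, Finsupp.sum_apply]
  rw [Finsupp.sum]
  exact Finset.sum_congr rfl fun a _ => by rw [Finsupp.single_apply]

lemma phi_inl (d : E →₀ ℕ) (i : Fin n) :
    phi d (Sum.inl i) = ∑ a ∈ d.support, if a.1.1 = i then d a else 0 := by
  classical
  rw [phi, Finsupp.add_apply, mapDomain_apply_eq,
    Finsupp.mapDomain_notin_range _ _ (by rintro ⟨e, h⟩; exact Sum.inr_ne_inl h), add_zero]
  exact Finset.sum_congr rfl fun a _ => by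
    congr 1; simp

lemma phi_inr (d : E →₀ ℕ) (j : Fin m) :
    phi d (Sum.inr j) = ∑ a ∈ d.support, if a.1.2 = j then d a else 0 := by
  classical
  rw [phi, Finsupp.add_apply,
    Finsupp.mapDomain_notin_range _ _ (by rintro ⟨e, h⟩; exact Sum.inl_ne_inr h),
    mapDomain_apply_eq, zero_add]
  exact Finset.sum_congr rfl fun a _ => by
    congr 1; simp

lemma phi_inl_ne {d : E →₀ ℕ} {i : Fin n} :
    phi d (Sum.inl i) ≠ 0 ↔ ∃ e ∈ d.support, e.1.1 = i := by
  classical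
  rw [phi_inl]
  rw [Ne, Finset.sum_eq_zero_iff]
  push_neg
  constructor
  · rintro ⟨e, he, hne⟩
    refine ⟨e, he, ?_⟩
    by_contra h; simp [h] at hne
  · rintro ⟨e, he, hei⟩
    exact ⟨e, he, by simp [hei, Finsupp.mem_support_iff.mp he]⟩

lemma phi_inr_ne {d : E →₀ ℕ} {j : Fin m} :
    phi d (Sum.inr j) ≠ 0 ↔ ∃ e ∈ d.support, e.1.2 = j := by
  classical
  rw [phi_inr]
  rw [Ne, Finset.sum_eq_zero_iff]
  push_neg
  constructor
  · rintro ⟨e, he, hne⟩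
    refine ⟨e, he, ?_⟩
    by_contra h; simp [h] at hne
  · rintro ⟨e, he, hej⟩
    exact ⟨e, he, by simp [hej, Finsupp.mem_support_iff.mp he]⟩

lemma phi_eq_zero {d : E →₀ ℕ} (h : phi d = 0) : d = 0 := by
  by_contra hd
  obtain ⟨e, he⟩ := Finsupp.ne_iff.mp hd
  simp only [Finsupp.coe_zero, Pi.zero_apply] at he
  have : phi d (Sum.inl e.1.1) ≠ 0 :=
    phi_inl_ne.mpr ⟨e, Finsupp.mem_support_iff.mpr he, rfl⟩
  rw [h] at this; simp at this


noncomputable def deg (d : E →₀ ℕ) : ℕ := d.sum fun _ k => k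

lemma deg_add_single (d : E →₀ ℕ) (e : E) : deg (d + Finsupp.single e 1) = deg d + 1 := by
  unfold deg
  rw [Finsupp.sum_add_index (by simp) (by simp), Finsupp.sum_single_index rfl]

lemma deg_eq_zero {d : E →₀ ℕ} (h : deg d = 0) : d = 0 := by
  classical
  ext a
  by_contra ha
  have ha' : a ∈ d.support := Finsupp.mem_support_iff.mpr (by simpa using ha)
  have := (Finset.sum_eq_zero_iff.mp h) a ha'
  exact (Finsupp.mem_support_iff.mp ha') this

lemma exists_decomp {d : E →₀ ℕ} {e : E} (h : d e ≠ 0) :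
    ∃ d₀, d = d₀ + Finsupp.single e 1 := by
  classical
  refine ⟨d - Finsupp.single e 1, ?_⟩
  ext a
  rcases eq_or_ne a e with rfl | hne
  · have hd : 1 ≤ d a := Nat.one_le_iff_ne_zero.mpr h
    simp only [Finsupp.add_apply, Finsupp.tsub_apply, Finsupp.single_apply]
    simp only [if_pos trivial, eq_self_iff_true, if_true]
    omega
  · simp [Finsupp.single_apply, (Ne.symm hne), Finsupp.tsub_apply]

lemma monomial_decomp (d₀ : E →₀ ℕ) (e : E) (c : K) :
    (monomial (d₀ + Finsupp.single e 1) c : MvPolynomial E K) = monomial d₀ c * X e := by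
  have hX : (X e : MvPolynomial E K) = monomial (Finsupp.single e 1) 1 := by
    rw [← X_pow_eq_monomial, pow_one]
  rw [hX, monomial_mul, mul_one]

lemma aeval_monomial_eq (d : E →₀ ℕ) (c : K) :
    aeval (fun e : E => (X (Sum.inl e.1.1) * X (Sum.inr e.1.2) :
      MvPolynomial (Fin n ⊕ Fin m) K)) (monomial d c) = monomial (phi d) c := by
  classical
  induction d using Finsupp.induction with
  | zero => simp [phi_zero, monomial_zero', aeval_C, algebraMap_eq]
  | single_add e k f hef hk ih =>
    have : (monomial (Finsupp.single e k + f) c : MvPolynomial E K)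
        = monomial f c * monomial (Finsupp.single e k) 1 := by
      rw [monomial_mul, mul_one, add_comm]
    rw [this, map_mul, ih, ← X_pow_eq_monomial, map_pow, aeval_X, mul_pow,
      X_pow_eq_monomial, X_pow_eq_monomial, monomial_mul, monomial_mul, mul_one, mul_one,
      phi_add, phi_single]
    congr 1
    abel_nf


lemma key (I : Ideal (MvPolynomial E K))
    (hF : ∀ i j r s, (i, j) ∈ E → r ≤ i → s ≤ j → (r, s) ∈ E)
    (hgen : ∀ (i₁ i₂ : Fin n) (j₁ j₂ : Fin m) (h₁₁ : (i₁,j₁) ∈ E) (h₂₂ : (i₂,j₂) ∈ E)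
      (h₁₂ : (i₁,j₂) ∈ E) (h₂₁ : (i₂,j₁) ∈ E),
      (X ⟨(i₁,j₁),h₁₁⟩ * X ⟨(i₂,j₂),h₂₂⟩ - X ⟨(i₁,j₂),h₁₂⟩ * X ⟨(i₂,j₁),h₂₁⟩ :
        MvPolynomial E K) ∈ I) :
    ∀ (k : ℕ) (d d' : E →₀ ℕ), deg d = k → phi d = phi d' →
      (monomial d (1 : K) - monomial d' 1) ∈ I := by
  intro k
  induction k with
  | zero =>
    intro d d' hdeg hphi
    have hd : d = 0 := deg_eq_zero hdeg
    subst hd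
    rw [phi_zero] at hphi
    rw [phi_eq_zero hphi.symm]
    simp
  | succ k ih =>
    have common : ∀ d d' : E →₀ ℕ, deg d = k + 1 → phi d = phi d' →
        ∀ e : E, d e ≠ 0 → d' e ≠ 0 → (monomial d (1:K) - monomial d' 1) ∈ I := by
      intro d d' hdeg hphi e hde hde'
      obtain ⟨d₀, rfl⟩ := exists_decomp hde
      obtain ⟨d₀', rfl⟩ := exists_decomp hde'
      have hdeg₀ : deg d₀ = k := by
        have := deg_add_single d₀ e; omega
      have hphi₀ : phi d₀ = phi d₀' := by
        rw [phi_add, phi_add] at hphi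
        ext a
        have := DFunLike.congr_fun hphi a
        simp only [Finsupp.add_apply] at this ⊢
        omega
      have hmem := ih d₀ d₀' hdeg₀ hphi₀
      have heq : (monomial (d₀ + Finsupp.single e 1) (1:K)
            - monomial (d₀' + Finsupp.single e 1) 1)
          = (monomial d₀ 1 - monomial d₀' 1) * X e := by
        rw [monomial_decomp, monomial_decomp]; ring
      rw [heq]
      exact Ideal.mul_mem_right _ _ hmem
    intro d d' hdeg hphi
    have hd0 : d ≠ 0 := by
      intro h; subst h; simp [deg, Finsupp.sum_zero_index] at hdeg
    have hsupp : d.support.Nonempty := Finsupp.support_nonempty_iff.mpr hd0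
    set T := d.support.image (fun e : E => e.1.1) with hT
    have hTne : T.Nonempty := hsupp.image _
    set i := T.max' hTne with hi
    obtain ⟨e, he, hei⟩ := Finset.mem_image.mp (T.max'_mem hTne)
    set j := e.1.2 with hj
    by_cases hde' : d' e ≠ 0
    · exact common d d' hdeg hphi e (Finsupp.mem_support_iff.mp he) hde'
    push_neg at hde'
    have hEij : (i, j) ∈ E := by
      have : (e : Fin n × Fin m) = (i, j) := Prod.ext hei rfl
      rw [← this]; exact e.2
    have hedef : e = (⟨(i,j), hEij⟩ : E) := Subtype.ext (Prod.ext hei rfl)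
    have h1 : phi d' (Sum.inl i) ≠ 0 := by
      rw [← hphi]; exact phi_inl_ne.mpr ⟨e, he, hei⟩
    obtain ⟨e₁, he₁, he₁i⟩ := phi_inl_ne.mp h1
    have h2 : phi d' (Sum.inr j) ≠ 0 := by
      rw [← hphi]; exact phi_inr_ne.mpr ⟨e, he, rfl⟩
    obtain ⟨e₂, he₂, he₂j⟩ := phi_inr_ne.mp h2
    set j₁ := e₁.1.2 with hj₁
    set i₂ := e₂.1.1 with hi₂
    have hEij₁ : (i, j₁) ∈ E := by
      have : (e₁ : Fin n × Fin m) = (i, j₁) := Prod.ext he₁i rfl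
      rw [← this]; exact e₁.2
    have he₁def : e₁ = (⟨(i,j₁), hEij₁⟩ : E) := Subtype.ext (Prod.ext he₁i rfl)
    have hEi₂j : (i₂, j) ∈ E := by
      have : (e₂ : Fin n × Fin m) = (i₂, j) := Prod.ext rfl he₂j
      rw [← this]; exact e₂.2
    have he₂def : e₂ = (⟨(i₂,j), hEi₂j⟩ : E) := Subtype.ext (Prod.ext rfl he₂j)
    have he₁ne₂ : e₁ ≠ e₂ := by
      intro h
      have heq : e₁ = e := by
        rw [hedef, he₁def]
        refine Subtype.ext (Prod.ext rfl ?_)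
        show j₁ = j
        rw [hj₁, h]; exact he₂j
      exact Finsupp.mem_support_iff.mp he₁ (by rw [heq]; exact hde')
    have hle : i₂ ≤ i := by
      have h3 : phi d (Sum.inl i₂) ≠ 0 := by
        rw [hphi]; exact phi_inl_ne.mpr ⟨e₂, he₂, rfl⟩
      obtain ⟨e₃, he₃, he₃i⟩ := phi_inl_ne.mp h3
      exact T.le_max' i₂ (Finset.mem_image.mpr ⟨e₃, he₃, he₃i⟩)
    have hEi₂j₁ : (i₂, j₁) ∈ E := hF i j₁ i₂ j₁ hEij₁ hle le_rfl
    -- decompose d'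
    obtain ⟨d₁, hd₁⟩ := exists_decomp (Finsupp.mem_support_iff.mp he₁)
    have hd₁e₂ : d₁ e₂ ≠ 0 := by
      have h4 := Finsupp.mem_support_iff.mp he₂
      rw [hd₁] at h4
      simpa [Finsupp.add_apply, Finsupp.single_apply, he₁ne₂] using h4
    obtain ⟨d₀, hd₀⟩ := exists_decomp hd₁e₂
    have hd' : d' = d₀ + Finsupp.single e₂ 1 + Finsupp.single e₁ 1 := by
      rw [hd₁, hd₀]
    set e₄ : E := ⟨(i₂, j₁), hEi₂j₁⟩ with he₄
    set d'' : E →₀ ℕ := d₀ + Finsupp.single e₄ 1 + Finsupp.single e 1 with hd''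
    have hswap : (monomial d' (1:K) - monomial d'' 1) ∈ I := by
      have hrw : (monomial d' (1:K) - monomial d'' 1)
          = monomial d₀ 1 * (X e₁ * X e₂ - X e * X e₄) := by
        rw [hd', hd'', monomial_decomp, monomial_decomp, monomial_decomp, monomial_decomp]
        ring
      rw [hrw, hedef, he₁def, he₂def, he₄]
      exact Ideal.mul_mem_left _ _ (hgen i i₂ j₁ j hEij₁ hEi₂j hEij hEi₂j₁)
    have hphi'' : phi d'' = phi d' := by
      rw [hd', hd'', phi_add, phi_add, phi_add, phi_add, phi_single, phi_single,
        phi_single, phi_single, hedef, he₁def, he₂def, he₄]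
      abel_nf
    have hd''e : d'' e ≠ 0 := by
      rw [hd'']
      simp only [Finsupp.add_apply, Finsupp.single_eq_same]
      omega
    have hmem1 := common d d'' hdeg (hphi.trans hphi''.symm) e
      (Finsupp.mem_support_iff.mp he) hd''e
    have : (monomial d (1:K) - monomial d' 1)
        = (monomial d 1 - monomial d'' 1) - (monomial d' 1 - monomial d'' 1) := by ring
    rw [this]
    exact sub_mem hmem1 hswap


end Stmt17

open Stmt17 in
theorem stmt_17 (K : Type*) [Field K] (n m : ℕ) (E : Set (Fin n × Fin m))
    (hFerrers : ∀ i j r s, (i, j) ∈ E → r ≤ i → s ≤ j → (r, s) ∈ E) :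
    RingHom.ker ((MvPolynomial.aeval
        (fun e : E => (X (Sum.inl e.1.1) * X (Sum.inr e.1.2) :
          MvPolynomial (Fin n ⊕ Fin m) K)) :
        MvPolynomial E K →ₐ[K] MvPolynomial (Fin n ⊕ Fin m) K).toRingHom) =
      Ideal.span {q : MvPolynomial E K |
        ∃ (i₁ i₂ : Fin n) (j₁ j₂ : Fin m) (h₁₁ : (i₁, j₁) ∈ E) (h₂₂ : (i₂, j₂) ∈ E)
          (h₁₂ : (i₁, j₂) ∈ E) (h₂₁ : (i₂, j₁) ∈ E),
          q = X (⟨(i₁, j₁), h₁₁⟩ : E) * X (⟨(i₂, j₂), h₂₂⟩ : E)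
              - X (⟨(i₁, j₂), h₁₂⟩ : E) * X (⟨(i₂, j₁), h₂₁⟩ : E)} := by
  classical
  set g : E → MvPolynomial (Fin n ⊕ Fin m) K :=
    fun e => X (Sum.inl e.1.1) * X (Sum.inr e.1.2) with hg
  set I := Ideal.span {q : MvPolynomial E K |
        ∃ (i₁ i₂ : Fin n) (j₁ j₂ : Fin m) (h₁₁ : (i₁, j₁) ∈ E) (h₂₂ : (i₂, j₂) ∈ E)
          (h₁₂ : (i₁, j₂) ∈ E) (h₂₁ : (i₂, j₁) ∈ E),
          q = X (⟨(i₁, j₁), h₁₁⟩ : E) * X (⟨(i₂, j₂), h₂₂⟩ : E)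
              - X (⟨(i₁, j₂), h₁₂⟩ : E) * X (⟨(i₂, j₁), h₂₁⟩ : E)} with hI
  apply le_antisymm
  · -- ker ≤ span
    intro f hf
    have hf' : aeval g f = 0 := hf
    have hgen : ∀ (i₁ i₂ : Fin n) (j₁ j₂ : Fin m) (h₁₁ : (i₁,j₁) ∈ E) (h₂₂ : (i₂,j₂) ∈ E)
        (h₁₂ : (i₁,j₂) ∈ E) (h₂₁ : (i₂,j₁) ∈ E),
        (X ⟨(i₁,j₁),h₁₁⟩ * X ⟨(i₂,j₂),h₂₂⟩ - X ⟨(i₁,j₂),h₁₂⟩ * X ⟨(i₂,j₁),h₂₁⟩ :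
          MvPolynomial E K) ∈ I :=
      fun i₁ i₂ j₁ j₂ h11 h22 h12 h21 =>
        Ideal.subset_span ⟨i₁, i₂, j₁, j₂, h11, h22, h12, h21, rfl⟩
    have keyA : ∀ d d' : E →₀ ℕ, phi d = phi d' →
        (monomial d (1:K) - monomial d' 1) ∈ I :=
      fun d d' h => key I hFerrers hgen (deg d) d d' rfl h
    have hmap : aeval g f = ∑ d ∈ f.support, monomial (phi d) (coeff d f) := by
      conv_lhs => rw [f.as_sum]
      rw [map_sum]
      exact Finset.sum_congr rfl fun d _ => aeval_monomial_eq d _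
    have hcoeff : ∀ b, ∑ d ∈ f.support.filter (fun d => phi d = b), coeff d f = 0 := by
      intro b
      calc ∑ d ∈ f.support.filter (fun d => phi d = b), coeff d f
          = ∑ d ∈ f.support, coeff b (monomial (phi d) (coeff d f)) := by
            rw [Finset.sum_filter]
            exact Finset.sum_congr rfl fun d _ =>
              (coeff_monomial b (phi d) (coeff d f)).symm
        _ = coeff b (aeval g f) := by rw [hmap, coeff_sum]
        _ = 0 := by rw [hf']; simp
    -- fiberwise decomposition
    set B := f.support.image phi with hB
    have hsplit : ∑ b ∈ B, ∑ d ∈ f.support.filter (fun d => phi d = b),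
        monomial d (coeff d f) = f := by
      rw [Finset.sum_fiberwise_of_maps_to (fun d hd => Finset.mem_image_of_mem phi hd)]
      exact (f.as_sum).symm
    rw [← hsplit]
    apply Ideal.sum_mem
    intro b hb
    obtain ⟨d₀, hd₀mem⟩ : (f.support.filter (fun d => phi d = b)).Nonempty := by
      obtain ⟨d, hd, hphid⟩ := Finset.mem_image.mp hb
      exact ⟨d, Finset.mem_filter.mpr ⟨hd, hphid⟩⟩
    have hd₀b : phi d₀ = b := (Finset.mem_filter.mp hd₀mem).2
    have hdecomp : ∑ d ∈ f.support.filter (fun d => phi d = b), monomial d (coeff d f)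
        = (∑ d ∈ f.support.filter (fun d => phi d = b),
            C (coeff d f) * (monomial d 1 - monomial d₀ 1))
          + monomial d₀ (∑ d ∈ f.support.filter (fun d => phi d = b), coeff d f) := by
      rw [map_sum (monomial d₀), ← Finset.sum_add_distrib]
      refine Finset.sum_congr rfl fun d _ => ?_
      rw [mul_sub, C_mul_monomial, C_mul_monomial, mul_one]
      ring
    rw [hdecomp, hcoeff b]
    refine add_mem (Ideal.sum_mem _ fun d hd => ?_) (by simp)
    exact Ideal.mul_mem_left _ _
      (keyA d d₀ (((Finset.mem_filter.mp hd).2).trans hd₀b.symm))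
  · rw [hI, Ideal.span_le]
    rintro q ⟨i₁, i₂, j₁, j₂, h11, h22, h12, h21, rfl⟩
    rw [SetLike.mem_coe, RingHom.mem_ker]
    simp only [AlgHom.toRingHom_eq_coe, RingHom.coe_coe, map_sub, map_mul, aeval_X]
    show (X (Sum.inl i₁) * X (Sum.inr j₁)) * (X (Sum.inl i₂) * X (Sum.inr j₂))
        - (X (Sum.inl i₁) * X (Sum.inr j₂)) * (X (Sum.inl i₂) * X (Sum.inr j₁))
        = (0 : MvPolynomial (Fin n ⊕ Fin m) K)
    ring
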